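/- Let ν ∈ (0,1) and let ψ : (0,∞) → ℂ be twice differentiable with ψ ∈ L²(0,∞) and (-ψ'' + ((ν² - 1/4)/x²)ψ) ∈ L²(0,∞). Then there exist constants C₅, C₆ ∈ ℂ such that ψ(x) = C₅ x^{-ν+1/2} + C₆ x^{ν+1/2} + O(x^{3/2}) as x → 0⁺. -/

import Mathlib

open MeasureTheory Set Filter Asymptotics Topology

lemma aux_W (ν c : ℝ) (hc : c * (c - 1) = ν ^ 2 - 1/4) (hc2 : 0 < 2 * c + 1)
    (ψ g : ℝ → ℂ)
    (hψ : ∀ x ∈ Ioi (0:ℝ), DifferentiableAt ℝ ψ x)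
    (hψ' : ∀ x ∈ Ioi (0:ℝ), DifferentiableAt ℝ (deriv ψ) x)
    (hg : ∀ x ∈ Ioi (0:ℝ),
      g x = -(deriv (deriv ψ) x) + (((ν ^ 2 - 1/4) / x ^ 2 : ℝ) : ℂ) * ψ x)
    (hgi : IntegrableOn g (Ioc (0:ℝ) 1))
    (hgi2 : IntegrableOn (fun x => ‖g x‖ ^ 2) (Ioc (0:ℝ) 1)) :
    ∃ (C : ℂ) (K : ℝ), ∀ x ∈ Ioc (0:ℝ) 1,
      ‖(((x ^ c : ℝ) : ℂ) * deriv ψ x - ((c * x ^ (c-1) : ℝ) : ℂ) * ψ x) - C‖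
        ≤ K * x ^ (c + 1/2) := by
  set W : ℝ → ℂ := fun x => ((x ^ c : ℝ) : ℂ) * deriv ψ x - ((c * x ^ (c-1) : ℝ) : ℂ) * ψ x
    with hW
  -- derivative of W
  have hWd : ∀ x ∈ Ioi (0:ℝ), HasDerivAt W (-(((x ^ c : ℝ) : ℂ) * g x)) x := by
    intro x hx
    have hx0 : (0:ℝ) < x := hx
    have h1 : HasDerivAt (fun y : ℝ => ((y ^ c : ℝ) : ℂ)) ((c * x ^ (c-1) : ℝ) : ℂ) x :=
      ((Real.hasDerivAt_rpow_const (p := c) (Or.inl hx0.ne'))).ofReal_comp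
    have h2 : HasDerivAt (fun y : ℝ => ((c * y ^ (c-1) : ℝ) : ℂ))
        ((c * ((c-1) * x ^ (c-1-1)) : ℝ) : ℂ) x :=
      (((Real.hasDerivAt_rpow_const (p := c-1) (Or.inl hx0.ne'))).const_mul c).ofReal_comp
    have hψx : HasDerivAt ψ (deriv ψ x) x := (hψ x hx).hasDerivAt
    have hψ'x : HasDerivAt (deriv ψ) (deriv (deriv ψ) x) x := (hψ' x hx).hasDerivAt
    have key := ((h1.mul hψ'x).sub (h2.mul hψx))
    have e : ((c * ((c-1) * x ^ (c-1-1)) : ℝ) : ℂ)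
        = (((ν ^ 2 - 1/4) / x ^ 2 : ℝ) : ℂ) * ((x ^ c : ℝ) : ℂ) := by
      norm_cast
      rw [← mul_assoc, hc]
      rw [show c - 1 - 1 = c - 2 by ring,
        show c - 2 = c + (-2 : ℝ) by ring, Real.rpow_add hx0]
      rw [Real.rpow_neg hx0.le, Real.rpow_two]
      field_simp
    rw [e] at key
    refine (key : HasDerivAt W _ x).congr_deriv ?_
    rw [hg x hx]
    ring
  -- integrability of u * g on Ioc 0 1
  set u : ℝ → ℂ := fun t => ((t ^ c : ℝ) : ℂ) with hu
  have hc2' : (-1 : ℝ) < 2 * c := by linarith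
  have hr2c : IntegrableOn (fun t : ℝ => t ^ (2*c)) (Ioc (0:ℝ) 1) := by
    have := intervalIntegral.intervalIntegrable_rpow' (a := 0) (b := 1) hc2'
    rwa [intervalIntegrable_iff_integrableOn_Ioc_of_le (by norm_num)] at this
  have husq : ∀ t ∈ Ioc (0:ℝ) 1, ∀ x : ℝ, 0 < x → ‖u t * g t‖
      ≤ (x ^ (-(c+1/2)) * t ^ (2*c) + ‖g t‖ ^ 2 / x ^ (-(c+1/2))) / 2 := by
    intro t ht x hx
    have ht0 : (0:ℝ) < t := ht.1
    have hnu : ‖u t‖ = t ^ c := by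
      simp [hu, Complex.norm_real, abs_of_pos (Real.rpow_pos_of_pos ht0 c)]
    have h2c : t ^ (2*c) = (t ^ c) ^ 2 := by
      rw [two_mul, Real.rpow_add ht0, sq]
    have hε : (0:ℝ) < x ^ (-(c+1/2)) := Real.rpow_pos_of_pos hx _
    rw [norm_mul, hnu, h2c]
    have hgn : (0:ℝ) ≤ ‖g t‖ := norm_nonneg _
    have htc : (0:ℝ) ≤ t ^ c := (Real.rpow_pos_of_pos ht0 c).le
    set ε : ℝ := x ^ (-(c+1/2)) with hεd
    calc t ^ c * ‖g t‖ = (2*(ε*(t^c*‖g t‖)))/(2*ε) := by field_simp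
      _ ≤ (ε^2*(t^c)^2+‖g t‖^2)/(2*ε) := by
          apply div_le_div_of_nonneg_right ?_ (by positivity)
          nlinarith [sq_nonneg (ε * t ^ c - ‖g t‖)]
      _ = (ε*(t^c)^2 + ‖g t‖^2/ε)/2 := by field_simp
  have hugm : AEStronglyMeasurable (fun t => u t * g t) (volume.restrict (Ioc (0:ℝ) 1)) := by
    apply AEStronglyMeasurable.mul ?_ hgi.aestronglyMeasurable
    apply ContinuousOn.aestronglyMeasurable ?_ measurableSet_Ioc
    intro t ht
    exact (Complex.continuous_ofReal.continuousAt.comp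
      (Real.continuousAt_rpow_const t c (Or.inl ht.1.ne'))).continuousWithinAt
  have hugi : IntegrableOn (fun t => u t * g t) (Ioc (0:ℝ) 1) := by
    apply Integrable.mono' (((hr2c.const_mul (1 ^ (-(c+1/2)))).add
      (hgi2.div_const (1 ^ (-(c+1/2))))).div_const 2) hugm
    rw [ae_restrict_iff' measurableSet_Ioc]
    exact ae_of_all _ (fun t ht => husq t ht 1 one_pos)
  -- the key integral bound
  set M : ℝ := ∫ t in Ioc (0:ℝ) 1, ‖g t‖ ^ 2 with hM
  have hM0 : 0 ≤ M := setIntegral_nonneg measurableSet_Ioc (fun t _ => by positivity)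
  have hbound : ∀ x ∈ Ioc (0:ℝ) 1,
      (∫ t in Ioc (0:ℝ) x, ‖u t * g t‖) ≤ ((2*c+1)⁻¹ + M) / 2 * x ^ (c + 1/2) := by
    intro x hx
    have hx0 : (0:ℝ) < x := hx.1
    set ε : ℝ := x ^ (-(c+1/2)) with hεd
    have hε : (0:ℝ) < ε := Real.rpow_pos_of_pos hx0 _
    have hsub : Ioc (0:ℝ) x ⊆ Ioc (0:ℝ) 1 := Ioc_subset_Ioc_right hx.2
    have hint1 : IntegrableOn (fun t : ℝ => t ^ (2*c)) (Ioc (0:ℝ) x) :=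
      hr2c.mono_set hsub
    have hint2 : IntegrableOn (fun t : ℝ => ‖g t‖ ^ 2) (Ioc (0:ℝ) x) := hgi2.mono_set hsub
    have step1 : (∫ t in Ioc (0:ℝ) x, ‖u t * g t‖)
        ≤ ∫ t in Ioc (0:ℝ) x, (ε * t ^ (2*c) + ‖g t‖ ^ 2 / ε) / 2 := by
      apply setIntegral_mono_on ((hugi.mono_set hsub).norm)
        (((hint1.const_mul ε).add (hint2.div_const ε)).div_const 2) measurableSet_Ioc
      exact fun t ht => husq t (hsub ht) x hx0
    have hI1 : (∫ t in Ioc (0:ℝ) x, t ^ (2*c)) = x ^ (2*c+1) / (2*c+1) := by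
      rw [← intervalIntegral.integral_of_le hx0.le,
        integral_rpow (Or.inl hc2'),
        Real.zero_rpow (by linarith)]
      ring
    have hI2 : (∫ t in Ioc (0:ℝ) x, ‖g t‖ ^ 2) ≤ M :=
      setIntegral_mono_set hgi2 (ae_of_all _ (fun t => by positivity))
        (HasSubset.Subset.eventuallyLE hsub)
    have step2 : (∫ t in Ioc (0:ℝ) x, (ε * t ^ (2*c) + ‖g t‖ ^ 2 / ε) / 2)
        = (ε * (x ^ (2*c+1) / (2*c+1)) + (∫ t in Ioc (0:ℝ) x, ‖g t‖ ^ 2) / ε) / 2 := by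
      rw [integral_div, integral_add (hint1.const_mul ε) (hint2.div_const ε),
        integral_const_mul, integral_div, hI1]
    have hεmul : ε * x ^ (2*c+1) = x ^ (c + 1/2) := by
      rw [hεd, ← Real.rpow_add hx0]; norm_num; ring_nf
    have hεinv : ε⁻¹ = x ^ (c + 1/2) := by
      rw [hεd, ← Real.rpow_neg_one, ← Real.rpow_mul hx0.le]; norm_num
    calc (∫ t in Ioc (0:ℝ) x, ‖u t * g t‖)
        ≤ (ε * (x ^ (2*c+1) / (2*c+1)) + (∫ t in Ioc (0:ℝ) x, ‖g t‖ ^ 2) / ε) / 2 := by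
          rw [← step2]; exact step1
      _ ≤ (x ^ (c+1/2) / (2*c+1) + M * x ^ (c+1/2)) / 2 := by
          have h1 : ε * (x ^ (2*c+1) / (2*c+1)) = x ^ (c+1/2) / (2*c+1) := by
            rw [← mul_div_assoc, hεmul]
          have h2 : (∫ t in Ioc (0:ℝ) x, ‖g t‖ ^ 2) / ε ≤ M * x ^ (c+1/2) := by
            rw [div_eq_mul_inv, hεinv]
            exact mul_le_mul_of_nonneg_right hI2 (Real.rpow_pos_of_pos hx0 _).le
          linarith
      _ = ((2*c+1)⁻¹ + M) / 2 * x ^ (c + 1/2) := by ring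
  refine ⟨W 1 + ∫ t in Ioc (0:ℝ) 1, u t * g t, ((2*c+1)⁻¹ + M) / 2, ?_⟩
  intro x hx
  have hx0 : (0:ℝ) < x := hx.1
  have hii : IntervalIntegrable (fun t => u t * g t) volume x 1 := by
    rw [intervalIntegrable_iff_integrableOn_Ioc_of_le hx.2]
    exact hugi.mono_set (Ioc_subset_Ioc_left hx0.le)
  have hftc : (∫ t in x..1, -(u t * g t)) = W 1 - W x := by
    apply intervalIntegral.integral_eq_sub_of_hasDerivAt
    · intro t ht
      rw [uIcc_of_le hx.2] at ht
      exact hWd t (lt_of_lt_of_le hx0 ht.1)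
    · exact hii.neg
  rw [intervalIntegral.integral_neg, intervalIntegral.integral_of_le hx.2] at hftc
  have hsplit : (∫ t in Ioc (0:ℝ) 1, u t * g t)
      = (∫ t in Ioc (0:ℝ) x, u t * g t) + ∫ t in Ioc x 1, u t * g t := by
    rw [← setIntegral_union (Ioc_disjoint_Ioc_of_le le_rfl) measurableSet_Ioc
      (hugi.mono_set (Ioc_subset_Ioc_right hx.2)) (hugi.mono_set (Ioc_subset_Ioc_left hx0.le)),
      Ioc_union_Ioc_eq_Ioc hx0.le hx.2]
  have hWx : W x - (W 1 + ∫ t in Ioc (0:ℝ) 1, u t * g t)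
      = -(∫ t in Ioc (0:ℝ) x, u t * g t) := by
    rw [hsplit]; linear_combination hftc
  show ‖W x - _‖ ≤ _
  rw [hWx, norm_neg]
  calc ‖∫ t in Ioc (0:ℝ) x, u t * g t‖ ≤ ∫ t in Ioc (0:ℝ) x, ‖u t * g t‖ :=
        norm_integral_le_integral_norm _
    _ ≤ ((2*c+1)⁻¹ + M) / 2 * x ^ (c + 1/2) := hbound x hx

/-- Boundary behavior at the singular endpoint `x = 0` of functions in the maximal
domain of `A = -d²/dx² + (ν²-1/4)/x²` on `L²(0,∞)`, for `0 < ν < 1`. -/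
theorem stmt_0 (ν : ℝ) (hν : ν ∈ Ioo (0:ℝ) 1) (ψ : ℝ → ℂ)
    (hψ : ∀ x ∈ Ioi (0:ℝ), DifferentiableAt ℝ ψ x)
    (hψ' : ∀ x ∈ Ioi (0:ℝ), DifferentiableAt ℝ (deriv ψ) x)
    (hL2 : IntegrableOn (fun x => ‖ψ x‖ ^ 2) (Ioi (0:ℝ)))
    (hAL2 : IntegrableOn
      (fun x => ‖-(deriv (deriv ψ) x) + (((ν ^ 2 - 1/4) / x ^ 2 : ℝ) : ℂ) * ψ x‖ ^ 2)
      (Ioi (0:ℝ))) :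
    ∃ C₅ C₆ : ℂ,
      (fun x : ℝ => ψ x - C₅ * ((x ^ (-ν + 1/2) : ℝ) : ℂ) - C₆ * ((x ^ (ν + 1/2) : ℝ) : ℂ))
        =O[𝓝[>] (0:ℝ)] fun x => x ^ ((3:ℝ)/2) := by
  obtain ⟨hν0, hν1⟩ := hν
  set g : ℝ → ℂ := fun x => -(deriv (deriv ψ) x) + (((ν^2 - 1/4)/x^2 : ℝ):ℂ) * ψ x with hgdef
  have hgi2 : IntegrableOn (fun x => ‖g x‖^2) (Ioc (0:ℝ) 1) :=
    hAL2.mono_set Ioc_subset_Ioi_self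
  have hgm : AEStronglyMeasurable g (volume.restrict (Ioc (0:ℝ) 1)) := by
    apply AEStronglyMeasurable.add
    · exact ((stronglyMeasurable_deriv (deriv ψ)).aestronglyMeasurable).neg
    · apply AEStronglyMeasurable.mul
      · exact (Complex.measurable_ofReal.comp
          (measurable_const.div (measurable_id.pow_const 2))).aestronglyMeasurable
      · apply ContinuousOn.aestronglyMeasurable ?_ measurableSet_Ioc
        intro t ht
        exact ((hψ t ht.1).continuousAt).continuousWithinAt
  have hgi : IntegrableOn g (Ioc (0:ℝ) 1) := by
    apply Integrable.mono' ((integrable_const (1:ℝ)).add hgi2.integrable) hgm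
    exact ae_of_all _ (fun t => by simp only [Pi.add_apply]; nlinarith [norm_nonneg (g t), sq_nonneg (‖g t‖ - 1)])
  set a : ℝ := -ν + 1/2 with ha
  set b : ℝ := ν + 1/2 with hb
  obtain ⟨C₁, K₁, h₁⟩ := aux_W ν a (by rw [ha]; ring) (by rw [ha]; linarith) ψ g hψ hψ'
    (fun x _ => rfl) hgi hgi2
  obtain ⟨C₂, K₂, h₂⟩ := aux_W ν b (by rw [hb]; ring) (by rw [hb]; linarith) ψ g hψ hψ'
    (fun x _ => rfl) hgi hgi2
  have hK₁0 : 0 ≤ K₁ := by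
    have h := h₁ 1 ⟨one_pos, le_refl 1⟩
    have e : (1:ℝ) ^ (a + 1/2) = 1 := Real.one_rpow _
    rw [e, mul_one] at h
    exact le_trans (norm_nonneg _) h
  have hK₂0 : 0 ≤ K₂ := by
    have h := h₂ 1 ⟨one_pos, le_refl 1⟩
    have e : (1:ℝ) ^ (b + 1/2) = 1 := Real.one_rpow _
    rw [e, mul_one] at h
    exact le_trans (norm_nonneg _) h
  have h2ν : ((2*ν : ℝ) : ℂ) ≠ 0 := by
    simp only [ne_eq, Complex.ofReal_eq_zero]; positivity
  refine ⟨-C₂ / ((2*ν : ℝ) : ℂ), C₁ / ((2*ν : ℝ) : ℂ), ?_⟩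
  rw [isBigO_iff]
  refine ⟨(K₁ + K₂) / (2*ν), ?_⟩
  filter_upwards [Ioo_mem_nhdsGT_of_mem (Set.left_mem_Ico.mpr one_pos)] with x hx
  have hx0 : (0:ℝ) < x := hx.1
  have hxI : x ∈ Ioc (0:ℝ) 1 := ⟨hx.1, hx.2.le⟩
  set A : ℂ := ((x ^ a : ℝ) : ℂ) with hA
  set B : ℂ := ((x ^ b : ℝ) : ℂ) with hB
  set Wa : ℂ := A * deriv ψ x - ((a * x ^ (a-1) : ℝ) : ℂ) * ψ x with hWa
  set Wb : ℂ := B * deriv ψ x - ((b * x ^ (b-1) : ℝ) : ℂ) * ψ x with hWb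
  have f1 : B * ((a * x ^ (a-1) : ℝ) : ℂ) = ((a : ℝ) : ℂ) := by
    rw [hB]
    norm_cast
    rw [mul_comm a, ← mul_assoc, ← Real.rpow_add hx0,
      show b + (a - 1) = 0 by (rw [ha, hb]; ring), Real.rpow_zero, one_mul]
  have f2 : A * ((b * x ^ (b-1) : ℝ) : ℂ) = ((b : ℝ) : ℂ) := by
    rw [hA]
    norm_cast
    rw [mul_comm b, ← mul_assoc, ← Real.rpow_add hx0,
      show a + (b - 1) = 0 by (rw [ha, hb]; ring), Real.rpow_zero, one_mul]
  have fν : ((b : ℝ) : ℂ) - ((a : ℝ) : ℂ) = ((2*ν : ℝ) : ℂ) := by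
    rw [ha, hb]; push_cast; ring
  have hkey : B * (Wa - C₁) - A * (Wb - C₂) = ((2*ν : ℝ) : ℂ) * ψ x - C₁ * B - (-C₂) * A := by
    rw [hWa, hWb, ← fν]
    linear_combination (ψ x) * f2 - (ψ x) * f1
  have hid : ψ x - (-C₂ / ((2*ν : ℝ) : ℂ)) * A - (C₁ / ((2*ν : ℝ) : ℂ)) * B
      = (B * (Wa - C₁) - A * (Wb - C₂)) / ((2*ν : ℝ) : ℂ) := by
    rw [eq_div_iff h2ν, hkey]
    have hνC : ((ν:ℝ):ℂ) ≠ 0 := Complex.ofReal_ne_zero.mpr hν0.ne'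
    push_cast
    field_simp
    ring
  have hnA : ‖A‖ = x ^ a := by
    rw [hA, Complex.norm_real, Real.norm_eq_abs, abs_of_pos (Real.rpow_pos_of_pos hx0 a)]
  have hnB : ‖B‖ = x ^ b := by
    rw [hB, Complex.norm_real, Real.norm_eq_abs, abs_of_pos (Real.rpow_pos_of_pos hx0 b)]
  have hbnd : ‖ψ x - (-C₂ / ((2*ν : ℝ) : ℂ)) * A - (C₁ / ((2*ν : ℝ) : ℂ)) * B‖
      ≤ (K₁ + K₂) / (2*ν) * x ^ ((3:ℝ)/2) := by
    rw [hid, norm_div]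
    have hn2ν : ‖((2*ν : ℝ) : ℂ)‖ = 2*ν := by
      rw [Complex.norm_real, Real.norm_eq_abs, abs_of_pos (by positivity)]
    rw [hn2ν]
    rw [div_le_iff₀ (by positivity : (0:ℝ) < 2*ν)]
    have e1 : x ^ b * (K₁ * x ^ (a + 1/2)) = K₁ * x ^ ((3:ℝ)/2) := by
      rw [mul_comm (x ^ b), mul_assoc, ← Real.rpow_add hx0,
        show a + 1/2 + b = (3:ℝ)/2 by rw [ha, hb]; ring]
    have e2 : x ^ a * (K₂ * x ^ (b + 1/2)) = K₂ * x ^ ((3:ℝ)/2) := by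
      rw [mul_comm (x ^ a), mul_assoc, ← Real.rpow_add hx0,
        show b + 1/2 + a = (3:ℝ)/2 by rw [ha, hb]; ring]
    calc ‖B * (Wa - C₁) - A * (Wb - C₂)‖
        ≤ ‖B‖ * ‖Wa - C₁‖ + ‖A‖ * ‖Wb - C₂‖ := by
          refine le_trans (norm_sub_le _ _) ?_
          rw [norm_mul, norm_mul]
      _ ≤ x ^ b * (K₁ * x ^ (a + 1/2)) + x ^ a * (K₂ * x ^ (b + 1/2)) := by
          rw [hnA, hnB]
          apply add_le_add
          · exact mul_le_mul_of_nonneg_left (h₁ x hxI) (Real.rpow_pos_of_pos hx0 b).le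
          · exact mul_le_mul_of_nonneg_left (h₂ x hxI) (Real.rpow_pos_of_pos hx0 a).le
      _ = (K₁ + K₂) * x ^ ((3:ℝ)/2) := by rw [e1, e2]; ring
      _ = (K₁ + K₂) / (2*ν) * x ^ ((3:ℝ)/2) * (2*ν) := by field_simp
  calc ‖ψ x - (-C₂ / ((2*ν : ℝ) : ℂ)) * A - (C₁ / ((2*ν : ℝ) : ℂ)) * B‖
      ≤ (K₁ + K₂) / (2*ν) * x ^ ((3:ℝ)/2) := hbnd
    _ = (K₁ + K₂) / (2*ν) * ‖x ^ ((3:ℝ)/2)‖ := by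
        rw [Real.norm_eq_abs, abs_of_pos (Real.rpow_pos_of_pos hx0 _)]
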